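/- arXiv:2002.10673 — 4 statements merged into one kernel-verified Lean document; each statement's English description precedes it below -/
import Mathlib

section
/- Let X⋆ be an n×n positive semidefinite matrix of rank r⋆ with eigendecomposition X⋆ = Σᵢ λᵢ vᵢvᵢᵀ where λ₁ ≥ … ≥ λ_{r⋆} > 0 and the vᵢ are orthonormal. Then X⋆ is the unique minimizer of the trace function tr(X) over all positive semidefinite matrices X satisfying tr(vᵢvᵢᵀ X) = λᵢ for i = 1,…,r⋆ and tr((vᵢvⱼᵀ + vⱼvᵢᵀ)/2 · X) = 0 for 1 ≤ i < j ≤ r⋆. -/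
open Matrix Finset

variable {n m p : ℕ}

lemma trace_vmv (a b : Fin n → ℝ) : (vecMulVec a b).trace = b ⬝ᵥ a := by
  simp [Matrix.trace, Matrix.diag, vecMulVec_apply, dotProduct, mul_comm]

lemma vmv_mul (a : Fin n → ℝ) (b : Fin m → ℝ) (M : Matrix (Fin m) (Fin p) ℝ) :
    vecMulVec a b * M = vecMulVec a (b ᵥ* M) := by
  ext i j
  simp [Matrix.mul_apply, vecMulVec_apply, vecMul, dotProduct, Finset.mul_sum, mul_assoc]

lemma trace_vmv_mul (a b : Fin n → ℝ) (M : Matrix (Fin n) (Fin n) ℝ) :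
    (vecMulVec a b * M).trace = b ⬝ᵥ (M *ᵥ a) := by
  rw [vmv_mul, trace_vmv, dotProduct_mulVec]

lemma vmv_mul_vmv (a : Fin n → ℝ) (b c : Fin m → ℝ) (d : Fin p → ℝ) :
    vecMulVec a b * vecMulVec c d = (b ⬝ᵥ c) • vecMulVec a d := by
  ext i j
  simp [Matrix.mul_apply, vecMulVec_apply, dotProduct, Finset.sum_mul, Finset.mul_sum]
  ring_nf
  exact Finset.sum_congr rfl fun k _ => by ring

lemma psd_trace_nonneg {A : Matrix (Fin n) (Fin n) ℝ} (hA : A.PosSemidef) : 0 ≤ A.trace := by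
  rw [Matrix.trace]
  refine Finset.sum_nonneg fun i _ => ?_
  have := hA.dotProduct_mulVec_nonneg (Pi.single i 1)
  simpa [dotProduct, mulVec, Pi.single_apply, Matrix.diag] using this

lemma trace_ct_mul_self_zero {B : Matrix (Fin n) (Fin n) ℝ}
    (h : (Bᴴ * B).trace = 0) : B = 0 := by
  have htr : ∑ i, ∑ k, B k i * B k i = 0 := by
    simpa [Matrix.trace, Matrix.diag, Matrix.mul_apply, conjTranspose_apply] using h
  ext i j
  have h1 : ∀ k ∈ Finset.univ, (0:ℝ) ≤ ∑ l, B l k * B l k :=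
    fun k _ => Finset.sum_nonneg fun l _ => mul_self_nonneg _
  have h2 := (Finset.sum_eq_zero_iff_of_nonneg h1).mp htr j (Finset.mem_univ _)
  have h3 := (Finset.sum_eq_zero_iff_of_nonneg
    (fun l _ => mul_self_nonneg (B l j))).mp h2 i (Finset.mem_univ _)
  simpa using mul_self_eq_zero.mp h3

lemma psd_trace_eq_zero {A : Matrix (Fin n) (Fin n) ℝ} (hA : A.PosSemidef)
    (h : A.trace = 0) : A = 0 := by
  obtain ⟨s, hherm, hss⟩ : ∃ s : Matrix (Fin n) (Fin n) ℝ, sᴴ = s ∧ sᴴ * s = A :=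
    open scoped MatrixOrder in
    ⟨CFC.sqrt A, (Matrix.nonneg_iff_posSemidef.mp (CFC.sqrt_nonneg A)).isHermitian, by
      open scoped MatrixOrder in
      rw [(Matrix.nonneg_iff_posSemidef.mp (CFC.sqrt_nonneg A)).isHermitian.eq]; exact CFC.sqrt_mul_sqrt_self A hA.nonneg⟩
  have hzero : s = 0 := trace_ct_mul_self_zero (by rw [hss, h])
  rw [← hss, hzero]; simp

lemma vmv_ct (a b : Fin n → ℝ) : (vecMulVec a b)ᴴ = vecMulVec b a := by
  ext i j; simp [conjTranspose_apply, vecMulVec_apply, mul_comm]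

lemma vmv_mulVec (a : Fin n → ℝ) (b : Fin m → ℝ) (x : Fin m → ℝ) :
    vecMulVec a b *ᵥ x = (b ⬝ᵥ x) • a := by
  ext i
  simp [mulVec, vecMulVec_apply, dotProduct, Finset.sum_mul]
  exact Finset.sum_congr rfl fun k _ => by ring

lemma sum_mulVec' {ι : Type*} (t : Finset ι) (f : ι → Matrix (Fin n) (Fin m) ℝ)
    (x : Fin m → ℝ) : (∑ i ∈ t, f i) *ᵥ x = ∑ i ∈ t, f i *ᵥ x := by
  ext k
  simp only [mulVec, dotProduct, Finset.sum_apply, Matrix.sum_apply, Finset.sum_mul]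
  rw [Finset.sum_comm]

lemma dotProduct_sum' {ι : Type*} (t : Finset ι) (x : Fin n → ℝ) (w : ι → Fin n → ℝ) :
    x ⬝ᵥ ∑ i ∈ t, w i = ∑ i ∈ t, x ⬝ᵥ w i := by
  simp only [dotProduct, Finset.sum_apply, Finset.mul_sum]
  rw [Finset.sum_comm]

/-- Any PSD matrix `Xstar = ∑ i, lam i • vᵢvᵢᵀ` (with `v` orthonormal and `lam` positive,
decreasing) is the unique minimizer of the trace over the PSD matrices satisfying
`tr(vᵢvᵢᵀ X) = lamᵢ` and `tr(((vᵢvⱼᵀ + vⱼvᵢᵀ)/2) X) = 0` for `i < j`. -/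
theorem stmt0 (n r : ℕ) (v : Fin r → Fin n → ℝ)
    (hortho : ∀ i j, v i ⬝ᵥ v j = if i = j then (1 : ℝ) else 0)
    (lam : Fin r → ℝ) (hpos : ∀ i, 0 < lam i)
    (hdec : ∀ i j : Fin r, i ≤ j → lam j ≤ lam i)
    (Xstar : Matrix (Fin n) (Fin n) ℝ)
    (hXstar : Xstar = ∑ i, lam i • vecMulVec (v i) (v i)) :
    (Xstar.PosSemidef ∧
      (∀ i : Fin r, ((vecMulVec (v i) (v i)) * Xstar).trace = lam i) ∧
      (∀ i j : Fin r, i < j →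
        (((2 : ℝ)⁻¹ • (vecMulVec (v i) (v j) + vecMulVec (v j) (v i))) * Xstar).trace = 0)) ∧
    ∀ X : Matrix (Fin n) (Fin n) ℝ, X.PosSemidef →
      (∀ i : Fin r, ((vecMulVec (v i) (v i)) * X).trace = lam i) →
      (∀ i j : Fin r, i < j →
        (((2 : ℝ)⁻¹ • (vecMulVec (v i) (v j) + vecMulVec (v j) (v i))) * X).trace = 0) →
      Xstar.trace ≤ X.trace ∧ (X.trace = Xstar.trace → X = Xstar) := by
  -- Xstar applied to v j
  have hmv : ∀ j : Fin r, Xstar *ᵥ v j = lam j • v j := by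
    intro j
    rw [hXstar, sum_mulVec' _ _ _]
    rw [Finset.sum_eq_single j]
    · rw [smul_mulVec, vmv_mulVec, hortho, if_pos rfl, one_smul]
    · intro k _ hk
      rw [smul_mulVec, vmv_mulVec, hortho, if_neg hk, zero_smul, smul_zero]
    · simp
  have hq : ∀ i j : Fin r, v i ⬝ᵥ Xstar *ᵥ v j = if i = j then lam i else 0 := by
    intro i j
    rw [hmv, dotProduct_smul, hortho]
    split <;> rename_i h <;> simp [h, mul_comm]
  -- feasibility of Xstar
  have hfeas1 : ∀ i : Fin r, ((vecMulVec (v i) (v i)) * Xstar).trace = lam i := by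
    intro i; rw [trace_vmv_mul, hq, if_pos rfl]
  have hfeas2 : ∀ i j : Fin r, i < j →
      (((2 : ℝ)⁻¹ • (vecMulVec (v i) (v j) + vecMulVec (v j) (v i))) * Xstar).trace = 0 := by
    intro i j hij
    rw [Matrix.smul_mul, Matrix.add_mul, trace_smul, trace_add, trace_vmv_mul, trace_vmv_mul,
      hq, hq, if_neg hij.ne, if_neg hij.ne', add_zero, smul_zero]
  have hpsd : Xstar.PosSemidef := by
    refine .of_dotProduct_mulVec_nonneg ?_ ?_
    · rw [hXstar]
      ext i j
      simp [conjTranspose_apply, Matrix.sum_apply, vecMulVec_apply, mul_comm]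
    · intro x
      have hXx : Xstar *ᵥ x = ∑ i, (lam i * (v i ⬝ᵥ x)) • v i := by
        rw [hXstar, sum_mulVec' _ _ _]
        exact Finset.sum_congr rfl fun i _ => by
          rw [smul_mulVec, vmv_mulVec, smul_smul]
      rw [hXx, dotProduct_sum' _ _ _]
      refine Finset.sum_nonneg fun i _ => ?_
      rw [dotProduct_smul]
      have h1 : star x ⬝ᵥ v i = v i ⬝ᵥ x := by
        simp [dotProduct, mul_comm]
      rw [h1, smul_eq_mul, mul_assoc]
      exact mul_nonneg (hpos i).le (mul_self_nonneg _)
  refine ⟨⟨hpsd, hfeas1, hfeas2⟩, ?_⟩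
  intro X hX hcon1 hcon2
  -- symmetry of X
  have hXT : Xᵀ = X := by
    ext i j; simpa using congrFun (congrFun hX.1 i) j
  have hsym : ∀ i j : Fin r, v i ⬝ᵥ X *ᵥ v j = v j ⬝ᵥ X *ᵥ v i := by
    intro i j
    rw [dotProduct_mulVec, ← hXT, vecMul_transpose, hXT, dotProduct_comm]
  have hc1 : ∀ i : Fin r, v i ⬝ᵥ X *ᵥ v i = lam i := by
    intro i; rw [← trace_vmv_mul]; exact hcon1 i
  have hc2 : ∀ i j : Fin r, i ≠ j → v i ⬝ᵥ X *ᵥ v j = 0 := by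
    have key : ∀ i j : Fin r, i < j → v i ⬝ᵥ X *ᵥ v j = 0 := by
      intro i j hij
      have h := hcon2 i j hij
      rw [Matrix.smul_mul, Matrix.add_mul, trace_smul, trace_add, trace_vmv_mul,
        trace_vmv_mul] at h
      rw [hsym j i] at h
      have : (2:ℝ)⁻¹ * ((v i ⬝ᵥ X *ᵥ v j) + (v i ⬝ᵥ X *ᵥ v j)) = 0 := h
      linarith
    intro i j hij
    rcases lt_or_gt_of_ne hij with h | h
    · exact key i j h
    · rw [hsym]; exact key j i h
  have hqX : ∀ i j : Fin r, v i ⬝ᵥ X *ᵥ v j = if i = j then lam i else 0 := by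
    intro i j
    split <;> rename_i h
    · subst h; exact hc1 i
    · exact hc2 i j h
  -- the projection P
  set P : Matrix (Fin n) (Fin n) ℝ := ∑ i, vecMulVec (v i) (v i) with hP
  have hPH : Pᴴ = P := by
    rw [hP, Matrix.conjTranspose_sum]
    exact Finset.sum_congr rfl fun i _ => vmv_ct _ _
  have hPP : P * P = P := by
    rw [hP]
    simp only [Finset.sum_mul, Finset.mul_sum, vmv_mul_vmv, hortho]
    refine Finset.sum_congr rfl fun i _ => ?_
    rw [Finset.sum_eq_single i]
    · rw [if_pos rfl, one_smul]
    · intro j _ hj; rw [if_neg hj, zero_smul]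
    · simp
  set Q : Matrix (Fin n) (Fin n) ℝ := 1 - P with hQ
  have hQH : Qᴴ = Q := by rw [hQ, Matrix.conjTranspose_sub, Matrix.conjTranspose_one, hPH]
  have hQQ : Q * Q = Q := by
    rw [hQ, sub_mul, one_mul, mul_sub, mul_one, hPP, sub_self, sub_zero]
  have hMpsd : (Q * X * Q).PosSemidef := by
    have := hX.mul_mul_conjTranspose_same Q
    rwa [hQH] at this
  have htrP : (P * X).trace = ∑ i, lam i := by
    rw [hP, Finset.sum_mul, trace_sum]
    exact Finset.sum_congr rfl fun i _ => hcon1 i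
  have htrXstar : Xstar.trace = ∑ i, lam i := by
    rw [hXstar, trace_sum]
    refine Finset.sum_congr rfl fun i _ => ?_
    rw [trace_smul, trace_vmv, hortho, if_pos rfl, smul_eq_mul, mul_one]
  have htrM : (Q * X * Q).trace = X.trace - Xstar.trace := by
    rw [trace_mul_comm, ← mul_assoc, hQQ, hQ, sub_mul, one_mul, trace_sub, htrP, htrXstar]
  have hle : Xstar.trace ≤ X.trace := by
    have := psd_trace_nonneg hMpsd
    rw [htrM] at this
    linarith
  refine ⟨hle, fun heq => ?_⟩
  -- equality case
  have hM0 : Q * X * Q = 0 := psd_trace_eq_zero hMpsd (by rw [htrM, heq, sub_self])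
  obtain ⟨s, hsherm, hss⟩ : ∃ s : Matrix (Fin n) (Fin n) ℝ, sᴴ = s ∧ s * s = X :=
    open scoped MatrixOrder in
    ⟨CFC.sqrt X, (Matrix.nonneg_iff_posSemidef.mp (CFC.sqrt_nonneg X)).isHermitian, CFC.sqrt_mul_sqrt_self X hX.nonneg⟩
  have hsQ : s * Q = 0 := by
    rw [← Matrix.conjTranspose_mul_self_eq_zero (A := s * Q)]
    rw [Matrix.conjTranspose_mul, hsherm, hQH, mul_assoc, ← mul_assoc s s Q, hss, ← mul_assoc]
    exact hM0
  have hXQ : X * Q = 0 := by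
    rw [← hss, mul_assoc, hsQ, mul_zero]
  have hQX : Q * X = 0 := by
    have : Q * X = (X * Q)ᴴ := by
      rw [Matrix.conjTranspose_mul, hQH, hX.1]
    rw [this, hXQ, Matrix.conjTranspose_zero]
  have hXP : X * P = X := by
    have : X * (1 - P) = 0 := hXQ
    rw [mul_sub, mul_one, sub_eq_zero] at this
    exact this.symm
  have hPX : P * X = X := by
    have : (1 - P) * X = 0 := hQX
    rw [sub_mul, one_mul, sub_eq_zero] at this
    exact this.symm
  have hPXP : P * X * P = Xstar := by
    rw [hXstar, hP]
    simp only [Finset.sum_mul, Finset.mul_sum]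
    refine Finset.sum_congr rfl fun i _ => ?_
    rw [Finset.sum_eq_single i]
    · rw [vmv_mul, vmv_mul_vmv, ← dotProduct_mulVec, hqX, if_pos rfl]
    · intro j _ hj
      rw [vmv_mul, vmv_mul_vmv, ← dotProduct_mulVec, hqX, if_neg hj, zero_smul]
    · simp
  rw [← hPXP, hPX, hXP]
end

section
/- For a real n₁×n₂ matrix X and t ≥ 0, the nuclear norm satisfies ‖X‖_* ≤ t if and only if there exist symmetric matrices X₁ ∈ S^{n₁} and X₂ ∈ S^{n₂} such that the block matrix [[X₁, X],[Xᵀ, X₂]] is positive semidefinite and tr(X₁) + tr(X₂) ≤ 2t. -/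
open Matrix Finset

section Aux

variable {m n : Type*} [Fintype m] [Fintype n]

lemma aux_vecMulVec_posSemidef (x : n → ℝ) : (vecMulVec x x).PosSemidef := by
  rw [posSemidef_iff_dotProduct_mulVec]
  constructor
  · ext i j
    simp [vecMulVec_apply, conjTranspose_apply, mul_comm]
  · intro y
    have h : star y ⬝ᵥ (vecMulVec x x *ᵥ y) = (x ⬝ᵥ y) * (x ⬝ᵥ y) := by
      simp only [dotProduct, mulVec, vecMulVec_apply, star_trivial, Finset.sum_mul,
        Finset.mul_sum]
      rw [Finset.sum_comm]
      exact Finset.sum_congr rfl fun i _ => Finset.sum_congr rfl fun j _ => by ring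
    rw [h]
    exact mul_self_nonneg _

lemma aux_psd_smul {c : ℝ} (hc : 0 ≤ c) {M : Matrix n n ℝ} (h : M.PosSemidef) :
    (c • M).PosSemidef := by
  rw [posSemidef_iff_dotProduct_mulVec]
  constructor
  · show (c • M)ᴴ = c • M
    rw [Matrix.conjTranspose_smul, star_trivial, h.1]
  · intro x
    rw [smul_mulVec, dotProduct_smul, smul_eq_mul]
    exact mul_nonneg hc (h.dotProduct_mulVec_nonneg x)

lemma aux_vecMulVec_mul_vecMulVec (a : m → ℝ) (b c : n → ℝ) (d : m → ℝ) :
    vecMulVec a b * vecMulVec c d = (b ⬝ᵥ c) • vecMulVec a d := by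
  ext i j
  simp only [mul_apply, vecMulVec_apply, Matrix.smul_apply, smul_eq_mul, dotProduct, Finset.sum_mul]
  exact Finset.sum_congr rfl fun k _ => by ring

lemma aux_trace_mul_vecMulVec (M : Matrix n n ℝ) (a b : n → ℝ) :
    (M * vecMulVec a b).trace = b ⬝ᵥ (M *ᵥ a) := by
  simp only [trace, diag_apply, mul_apply, vecMulVec_apply, dotProduct, mulVec,
    Finset.mul_sum]
  exact Finset.sum_congr rfl fun i _ => Finset.sum_congr rfl fun j _ => by ring

lemma aux_trace_vecMulVec (a b : n → ℝ) : (vecMulVec a b).trace = a ⬝ᵥ b := by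
  simp [trace, vecMulVec_apply, dotProduct]

lemma aux_psd_trace_nonneg [DecidableEq n] {M : Matrix n n ℝ} (h : M.PosSemidef) :
    0 ≤ M.trace := by
  rw [trace]
  refine Finset.sum_nonneg fun i _ => ?_
  have := h.dotProduct_mulVec_nonneg (Pi.single i 1)
  simpa [dotProduct, mulVec, Pi.single_apply] using this

end Aux

/-- The nuclear norm of a real matrix: the sum of its singular values, i.e. the sum of the
square roots of the eigenvalues of `Xᴴ X`. -/
noncomputable def nuclearNorm {n₁ n₂ : ℕ} (X : Matrix (Fin n₁) (Fin n₂) ℝ) : ℝ :=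
  ∑ i, Real.sqrt ((Matrix.isHermitian_conjTranspose_mul_self X).eigenvalues i)

/-- SDP representation of the nuclear norm: `‖X‖_* ≤ t` iff there are symmetric `X₁, X₂` with
`[[X₁, X],[Xᵀ, X₂]] ⪰ 0` and `tr X₁ + tr X₂ ≤ 2t`. -/
theorem stmt6 (n₁ n₂ : ℕ) (X : Matrix (Fin n₁) (Fin n₂) ℝ) (t : ℝ) (ht : 0 ≤ t) :
    nuclearNorm X ≤ t ↔
      ∃ (X₁ : Matrix (Fin n₁) (Fin n₁) ℝ) (X₂ : Matrix (Fin n₂) (Fin n₂) ℝ),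
        X₁.IsSymm ∧ X₂.IsSymm ∧
        (Matrix.fromBlocks X₁ X Xᵀ X₂).PosSemidef ∧
        X₁.trace + X₂.trace ≤ 2 * t := by
  classical
  have hH : (Xᴴ * X).IsHermitian := Matrix.isHermitian_conjTranspose_mul_self X
  set μ : Fin n₂ → ℝ := hH.eigenvalues with hμdef
  set σ : Fin n₂ → ℝ := fun i => Real.sqrt (μ i) with hσdef
  have hnn : nuclearNorm X = ∑ i, σ i := rfl
  have hμ0 : ∀ i, 0 ≤ μ i := fun i =>
    (Matrix.posSemidef_conjTranspose_mul_self X).eigenvalues_nonneg i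
  have hσ0 : ∀ i, 0 ≤ σ i := fun i => Real.sqrt_nonneg _
  have hσsq : ∀ i, σ i * σ i = μ i := fun i => Real.mul_self_sqrt (hμ0 i)
  set v : Fin n₂ → Fin n₂ → ℝ := fun i => hH.eigenvectorBasis i with hvdef
  have hvv : ∀ i j, v i ⬝ᵥ v j = if i = j then 1 else 0 := by
    intro i j
    have h := (orthonormal_iff_ite.mp hH.eigenvectorBasis.orthonormal) i j
    simpa [PiLp.inner_apply, RCLike.inner_apply, conj_trivial, dotProduct, hvdef, mul_comm] using h
  have heig : ∀ i, (Xᴴ * X) *ᵥ v i = μ i • v i := fun i => hH.mulVec_eigenvectorBasis i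
  have hXdot : ∀ i j, (X *ᵥ v i) ⬝ᵥ (X *ᵥ v j) = if i = j then μ i else 0 := by
    intro i j
    have h1 : (X *ᵥ v i) ⬝ᵥ (X *ᵥ v j) = v i ⬝ᵥ ((Xᴴ * X) *ᵥ v j) := by
      rw [← mulVec_mulVec, conjTranspose_eq_transpose_of_trivial,
        dotProduct_mulVec (v i) Xᵀ, vecMul_transpose]
    rw [h1, heig j, dotProduct_smul, hvv i j, smul_eq_mul]
    split_ifs with h
    · subst h; ring
    · ring
  have hXv0 : ∀ i, σ i = 0 → X *ᵥ v i = 0 := by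
    intro i h
    have hm : μ i = 0 := by rw [← hσsq i, h, mul_zero]
    have h2 := hXdot i i
    rw [if_pos rfl, hm] at h2
    exact dotProduct_self_eq_zero.mp h2
  set u : Fin n₂ → Fin n₁ → ℝ := fun i => (σ i)⁻¹ • (X *ᵥ v i) with hudef
  have hu0 : ∀ i, σ i = 0 → u i = 0 := by
    intro i h
    show (σ i)⁻¹ • (X *ᵥ v i) = 0
    rw [hXv0 i h, smul_zero]
  have hXu : ∀ i, X *ᵥ v i = σ i • u i := by
    intro i
    by_cases h : σ i = 0
    · rw [hXv0 i h, hu0 i h, smul_zero]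
    · show X *ᵥ v i = σ i • ((σ i)⁻¹ • (X *ᵥ v i))
      rw [smul_smul, mul_inv_cancel₀ h, one_smul]
  have huu : ∀ i j, u i ⬝ᵥ u j = if i = j then (if σ i = 0 then 0 else 1) else 0 := by
    intro i j
    show ((σ i)⁻¹ • (X *ᵥ v i)) ⬝ᵥ ((σ j)⁻¹ • (X *ᵥ v j)) = _
    rw [smul_dotProduct, dotProduct_smul, hXdot i j]
    simp only [smul_eq_mul]
    split_ifs with h h2
    · subst h; simp [h2, ← hσsq i]
    · subst h
      rw [← hσsq i]
      field_simp
    · ring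
  have huXv : ∀ i, u i ⬝ᵥ (X *ᵥ v i) = σ i := by
    intro i
    rw [hXu i, dotProduct_smul, huu i i, smul_eq_mul]
    by_cases h : σ i = 0 <;> simp [h]
  have hcomp' : ∀ a b, ∑ k, v k a * v k b = if a = b then 1 else 0 := by
    intro a b
    have hU := (Matrix.mem_unitaryGroup_iff).mp hH.eigenvectorUnitary.2
    have h2 := congrFun (congrFun hU a) b
    simp only [Matrix.mul_apply, Matrix.star_apply, star_trivial,
      Matrix.IsHermitian.eigenvectorUnitary_apply, Matrix.one_apply] at h2
    exact h2
  have hcomp : ∑ k, vecMulVec (v k) (v k) = (1 : Matrix (Fin n₂) (Fin n₂) ℝ) := by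
    ext a b
    rw [Matrix.sum_apply]
    simp only [vecMulVec_apply]
    rw [hcomp' a b, Matrix.one_apply]
  have hXentry : ∀ a b, ∑ i, σ i * (u i a * v i b) = X a b := by
    intro a b
    have h1 : ∀ i, σ i * (u i a * v i b) = (X *ᵥ v i) a * v i b := by
      intro i
      rw [hXu i, Pi.smul_apply, smul_eq_mul]
      ring
    calc ∑ i, σ i * (u i a * v i b) = ∑ i, ∑ k, X a k * (v i k * v i b) := by
          refine Finset.sum_congr rfl fun i _ => ?_
          rw [h1 i]
          simp only [mulVec, dotProduct, Finset.sum_mul]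
          exact Finset.sum_congr rfl fun k _ => by ring
      _ = ∑ k, X a k * (∑ i, v i k * v i b) := by
          rw [Finset.sum_comm]
          exact Finset.sum_congr rfl fun k _ => by rw [Finset.mul_sum]
      _ = X a b := by
          simp only [hcomp']
          simp [Finset.sum_ite_eq', mul_ite]
  constructor
  · -- forward
    intro hle
    refine ⟨∑ i, σ i • vecMulVec (u i) (u i), ∑ i, σ i • vecMulVec (v i) (v i), ?_, ?_, ?_, ?_⟩
    · rw [Matrix.IsSymm, Matrix.transpose_sum]
      refine Finset.sum_congr rfl fun i _ => ?_
      rw [Matrix.transpose_smul]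
      congr 1
      ext a b
      simp [vecMulVec_apply, mul_comm]
    · rw [Matrix.IsSymm, Matrix.transpose_sum]
      refine Finset.sum_congr rfl fun i _ => ?_
      rw [Matrix.transpose_smul]
      congr 1
      ext a b
      simp [vecMulVec_apply, mul_comm]
    · have hblock : Matrix.fromBlocks (∑ i, σ i • vecMulVec (u i) (u i)) X Xᵀ
          (∑ i, σ i • vecMulVec (v i) (v i)) =
          ∑ i, σ i • vecMulVec (Sum.elim (u i) (v i)) (Sum.elim (u i) (v i)) := by
        ext a b
        rw [Matrix.sum_apply]
        rcases a with a | a <;> rcases b with b | b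
        · simp [Matrix.fromBlocks, Matrix.sum_apply, vecMulVec_apply]
        · simp only [Matrix.fromBlocks, Matrix.of_apply, Sum.elim_inl, Sum.elim_inr,
            Matrix.smul_apply, vecMulVec_apply, smul_eq_mul]
          exact (hXentry a b).symm
        · simp only [Matrix.fromBlocks, Matrix.of_apply, Sum.elim_inl, Sum.elim_inr,
            Matrix.smul_apply, vecMulVec_apply, smul_eq_mul, Matrix.transpose_apply]
          rw [← hXentry b a]
          exact Finset.sum_congr rfl fun i _ => by ring
        · simp [Matrix.fromBlocks, Matrix.sum_apply, vecMulVec_apply]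
      rw [hblock]
      have hterm : ∀ i, (σ i • vecMulVec (Sum.elim (u i) (v i))
          (Sum.elim (u i) (v i)) : Matrix _ _ ℝ).PosSemidef := fun i =>
        aux_psd_smul (hσ0 i) (aux_vecMulVec_posSemidef _)
      have hsum : ∀ (s : Finset (Fin n₂)),
          (∑ i ∈ s, σ i • vecMulVec (Sum.elim (u i) (v i)) (Sum.elim (u i) (v i))).PosSemidef := by
        intro s
        induction s using Finset.induction with
        | empty => simpa using Matrix.PosSemidef.zero
        | insert _ _ hnotmem ih =>
            rw [Finset.sum_insert hnotmem]
            exact (hterm _).add ih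
      exact hsum Finset.univ
    · have ht1 : (∑ i, σ i • vecMulVec (u i) (u i)).trace = ∑ i, σ i := by
        rw [Matrix.trace_sum]
        refine Finset.sum_congr rfl fun i _ => ?_
        rw [Matrix.trace_smul, aux_trace_vecMulVec, huu i i, smul_eq_mul]
        by_cases h : σ i = 0 <;> simp [h]
      have ht2 : (∑ i, σ i • vecMulVec (v i) (v i)).trace = ∑ i, σ i := by
        rw [Matrix.trace_sum]
        refine Finset.sum_congr rfl fun i _ => ?_
        rw [Matrix.trace_smul, aux_trace_vecMulVec, hvv i i, smul_eq_mul]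
        simp
      rw [ht1, ht2]
      rw [hnn] at hle
      linarith
  · -- backward
    rintro ⟨X₁, X₂, hs1, hs2, hPSD, htr⟩
    have hvXu : ∀ i, v i ⬝ᵥ (Xᵀ *ᵥ u i) = σ i := by
      intro i
      rw [dotProduct_mulVec, vecMul_transpose, dotProduct_comm, huXv i]
    have hkey : ∀ i, 2 * σ i ≤ u i ⬝ᵥ (X₁ *ᵥ u i) + v i ⬝ᵥ (X₂ *ᵥ v i) := by
      intro i
      have h0 := hPSD.dotProduct_mulVec_nonneg (Sum.elim (u i) (-(v i)))
      rw [Matrix.fromBlocks_mulVec] at h0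
      have hstar : star (Sum.elim (u i) (-(v i))) = Sum.elim (u i) (-(v i)) := star_trivial _
      rw [hstar, sumElim_dotProduct_sumElim] at h0
      simp only [Sum.elim_comp_inl, Sum.elim_comp_inr] at h0
      have e1 : u i ⬝ᵥ (X₁ *ᵥ u i + X *ᵥ (-(v i))) = u i ⬝ᵥ (X₁ *ᵥ u i) - σ i := by
        rw [dotProduct_add, Matrix.mulVec_neg, dotProduct_neg, huXv i]
        ring
      have e2 : (-(v i)) ⬝ᵥ (Xᵀ *ᵥ u i + X₂ *ᵥ (-(v i))) = v i ⬝ᵥ (X₂ *ᵥ v i) - σ i := by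
        rw [neg_dotProduct, dotProduct_add, Matrix.mulVec_neg, dotProduct_neg, hvXu i]
        ring
      rw [e1, e2] at h0
      linarith
    have hX1psd : X₁.PosSemidef := by
      have h := hPSD.submatrix (Sum.inl : Fin n₁ → Fin n₁ ⊕ Fin n₂)
      have he : (Matrix.fromBlocks X₁ X Xᵀ X₂).submatrix Sum.inl Sum.inl = X₁ := by
        ext a b; simp [Matrix.submatrix_apply, Matrix.fromBlocks]
      rwa [he] at h
    set P : Matrix (Fin n₁) (Fin n₁) ℝ := ∑ i, vecMulVec (u i) (u i) with hPdef
    have hPsymm : Pᵀ = P := by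
      rw [hPdef, Matrix.transpose_sum]
      refine Finset.sum_congr rfl fun i _ => ?_
      ext a b; simp [vecMulVec_apply, mul_comm]
    have hPP : P * P = P := by
      rw [hPdef, Finset.sum_mul]
      refine Finset.sum_congr rfl fun i _ => ?_
      rw [Finset.mul_sum]
      have hterm : ∀ j, vecMulVec (u i) (u i) * vecMulVec (u j) (u j) =
          if i = j then vecMulVec (u i) (u i) else 0 := by
        intro j
        rw [aux_vecMulVec_mul_vecMulVec, huu i j]
        split_ifs with h h2
        · subst h; rw [hu0 i h2]; ext a b; simp [vecMulVec_apply]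
        · subst h; simp
        · simp
      simp only [hterm]
      simp
    have htr1 : ∑ i, u i ⬝ᵥ (X₁ *ᵥ u i) = (X₁ * P).trace := by
      rw [hPdef, Finset.mul_sum, Matrix.trace_sum]
      exact Finset.sum_congr rfl fun i _ => (aux_trace_mul_vecMulVec X₁ (u i) (u i)).symm
    have hle1 : (X₁ * P).trace ≤ X₁.trace := by
      have hQ : ((1 - P) * X₁ * (1 - P)ᴴ).PosSemidef :=
        hX1psd.mul_mul_conjTranspose_same (1 - P)
      rw [conjTranspose_eq_transpose_of_trivial, Matrix.transpose_sub, Matrix.transpose_one,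
        hPsymm] at hQ
      have htr0 : 0 ≤ ((1 - P) * X₁ * (1 - P)).trace := aux_psd_trace_nonneg hQ
      have hexp : ((1 - P) * X₁ * (1 - P)).trace = X₁.trace - (X₁ * P).trace := by
        have h1 : (1 - P) * X₁ * (1 - P) = X₁ - P * X₁ - X₁ * P + P * X₁ * P := by
          noncomm_ring
        rw [h1, Matrix.trace_add, Matrix.trace_sub, Matrix.trace_sub,
          Matrix.trace_mul_comm (P * X₁) P, ← Matrix.mul_assoc, hPP,
          Matrix.trace_mul_comm P X₁]
        ring
      linarith
    have htr2 : ∑ i, v i ⬝ᵥ (X₂ *ᵥ v i) = X₂.trace := by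
      have h : ∑ i, v i ⬝ᵥ (X₂ *ᵥ v i) = (X₂ * ∑ k, vecMulVec (v k) (v k)).trace := by
        rw [Finset.mul_sum, Matrix.trace_sum]
        exact Finset.sum_congr rfl fun i _ => (aux_trace_mul_vecMulVec X₂ (v i) (v i)).symm
      rw [h, hcomp, Matrix.mul_one]
    rw [hnn]
    have hsum := Finset.sum_le_sum (fun i (_ : i ∈ Finset.univ) => hkey i)
    rw [Finset.sum_add_distrib, ← Finset.mul_sum, htr1, htr2] at hsum
    linarith
end

section
/- Let U, V ∈ ℝ^{n×r} have orthonormal columns and let E ∈ ℝ^{n×n} satisfy UᵀE = 0 and EV = 0 (i.e., E lies in T⊥) with operator norm ‖E‖_op ≤ 5/8. Let Ỹ = [[0, UVᵀ + E],[(UVᵀ + E)ᵀ, 0]]. Then for every z = [z₁; z₂] ∈ ℝ^{2n} orthogonal to the range of [U; V], one has zᵀ(I − Ỹ)z ≥ (3/8)(‖z₁‖² + ‖z₂‖²). -/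
open Matrix
open scoped RealInnerProductSpace

/-- Quadratic-form lower bound: with `Y₀ = UVᵀ + E`, `E ∈ T⊥`, `‖E‖_op ≤ 5/8`, and
`Ỹ = [[0, Y₀],[Y₀ᵀ, 0]]`, every `z = [z₁; z₂]` orthogonal to the range of `[U; V]` satisfies
`zᵀ(I − Ỹ)z ≥ (3/8)(‖z₁‖² + ‖z₂‖²)`. -/
theorem stmt11 (n r : ℕ)
    (U V : Matrix (Fin n) (Fin r) ℝ) (hU : Uᵀ * U = 1) (hV : Vᵀ * V = 1)
    (E : Matrix (Fin n) (Fin n) ℝ) (hUE : Uᵀ * E = 0) (hEV : E * V = 0)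
    (hEnorm : ‖Matrix.toEuclideanCLM (𝕜 := ℝ) E‖ ≤ 5 / 8)
    (Ytilde : Matrix (Fin n ⊕ Fin n) (Fin n ⊕ Fin n) ℝ)
    (hYtilde : Ytilde = Matrix.fromBlocks 0 (U * Vᵀ + E) (U * Vᵀ + E)ᵀ 0)
    (z₁ z₂ : Fin n → ℝ)
    (horth : Uᵀ.mulVec z₁ + Vᵀ.mulVec z₂ = 0) :
    (3 / 8 : ℝ) * (z₁ ⬝ᵥ z₁ + z₂ ⬝ᵥ z₂) ≤
      Sum.elim z₁ z₂ ⬝ᵥ (1 - Ytilde).mulVec (Sum.elim z₁ z₂) := by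
  classical
  subst hYtilde
  set Y₀ := U * Vᵀ + E with hY₀
  -- expand the quadratic form
  have hsym : z₂ ⬝ᵥ Y₀ᵀ *ᵥ z₁ = z₁ ⬝ᵥ Y₀ *ᵥ z₂ := by
    rw [dotProduct_mulVec, vecMul_transpose, dotProduct_comm]
  have expand : Sum.elim z₁ z₂ ⬝ᵥ (1 - fromBlocks 0 Y₀ Y₀ᵀ 0) *ᵥ (Sum.elim z₁ z₂)
      = z₁ ⬝ᵥ z₁ + z₂ ⬝ᵥ z₂ - 2 * (z₁ ⬝ᵥ Y₀ *ᵥ z₂) := by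
    rw [sub_mulVec, one_mulVec, fromBlocks_mulVec]
    simp only [Sum.elim_comp_inl, Sum.elim_comp_inr, zero_mulVec, zero_add, add_zero]
    have hsub : Sum.elim z₁ z₂ - Sum.elim (Y₀ *ᵥ z₂) (Y₀ᵀ *ᵥ z₁)
        = Sum.elim (z₁ - Y₀ *ᵥ z₂) (z₂ - Y₀ᵀ *ᵥ z₁) := by
      funext i; cases i <;> simp
    rw [hsub, sumElim_dotProduct_sumElim, dotProduct_sub, dotProduct_sub, hsym]
    ring
  rw [expand]
  -- the U Vᵀ part is nonpositive
  have hUV : z₁ ⬝ᵥ (U * Vᵀ) *ᵥ z₂ ≤ 0 := by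
    have h1 : Uᵀ *ᵥ z₁ = -(Vᵀ *ᵥ z₂) := eq_neg_of_add_eq_zero_left horth
    have h2 : z₁ ⬝ᵥ (U * Vᵀ) *ᵥ z₂ = (Uᵀ *ᵥ z₁) ⬝ᵥ (Vᵀ *ᵥ z₂) := by
      rw [← mulVec_mulVec, dotProduct_mulVec, ← mulVec_transpose]
    rw [h2, h1, neg_dotProduct]
    simp only [neg_nonpos]
    exact Finset.sum_nonneg fun i _ => mul_self_nonneg _
  -- euclidean space machinery for the E part
  set toE : (Fin n → ℝ) → EuclideanSpace ℝ (Fin n) :=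
    fun x => (WithLp.equiv 2 (Fin n → ℝ)).symm x with htoE
  have hinner : ∀ x y : Fin n → ℝ, (inner ℝ (toE x) (toE y) : ℝ) = x ⬝ᵥ y := by
    intro x y
    simp [htoE, PiLp.inner_apply, dotProduct, RCLike.inner_apply, mul_comm]
  have hnormsq : ∀ x : Fin n → ℝ, ‖toE x‖ ^ 2 = x ⬝ᵥ x := by
    intro x
    rw [← real_inner_self_eq_norm_sq, hinner]
  have hnn : ∀ x : Fin n → ℝ, (0:ℝ) ≤ ‖toE x‖ := fun x => norm_nonneg _
  have hE : |z₁ ⬝ᵥ E *ᵥ z₂| ≤ 5 / 8 * (‖toE z₁‖ * ‖toE z₂‖) := by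
    have hEapp : toE (E *ᵥ z₂) = Matrix.toEuclideanCLM (𝕜 := ℝ) E (toE z₂) :=
      (Matrix.toEuclideanCLM_toLp E z₂).symm
    calc |z₁ ⬝ᵥ E *ᵥ z₂| = |(inner ℝ (toE z₁) (toE (E *ᵥ z₂)) : ℝ)| := by rw [hinner]
      _ ≤ ‖toE z₁‖ * ‖toE (E *ᵥ z₂)‖ := abs_real_inner_le_norm _ _
      _ ≤ ‖toE z₁‖ * (5 / 8 * ‖toE z₂‖) := by
          apply mul_le_mul_of_nonneg_left _ (hnn z₁)
          rw [hEapp]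
          exact ((Matrix.toEuclideanCLM (𝕜 := ℝ) E).le_opNorm _).trans
            (mul_le_mul_of_nonneg_right hEnorm (hnn z₂))
      _ = 5 / 8 * (‖toE z₁‖ * ‖toE z₂‖) := by ring
  have h2ab : 2 * (‖toE z₁‖ * ‖toE z₂‖) ≤ z₁ ⬝ᵥ z₁ + z₂ ⬝ᵥ z₂ := by
    rw [← hnormsq z₁, ← hnormsq z₂]
    nlinarith [sq_nonneg (‖toE z₁‖ - ‖toE z₂‖)]
  have hsplit : z₁ ⬝ᵥ Y₀ *ᵥ z₂ = z₁ ⬝ᵥ (U * Vᵀ) *ᵥ z₂ + z₁ ⬝ᵥ E *ᵥ z₂ := by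
    rw [hY₀, add_mulVec, dotProduct_add]
  have habs := abs_le.mp hE
  have hab : (0:ℝ) ≤ ‖toE z₁‖ * ‖toE z₂‖ := mul_nonneg (hnn z₁) (hnn z₂)
  nlinarith [habs.1, habs.2]
end

section
/- Under the hypotheses of the previous statement (U, V with orthonormal columns, E ∈ T⊥, ‖E‖_op ≤ 5/8, Ỹ the block matrix with off-diagonal block UVᵀ + E), the matrix I − Ỹ is positive semidefinite, its kernel contains range([U;V]), and rank(I − Ỹ) = 2n − r; moreover its smallest nonzero eigenvalue is at least 3/8. -/
open Matrix

private lemma aux_sq {t : ℝ} (h1 : 0 < t) (h2 : t < 3 / 8) :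
    25 / 64 < (1 - t) ^ 2 ∧ (1 - t) ^ 2 < 1 := by constructor <;> nlinarith

private lemma aux_cancel {s t : ℝ} (hs : 25 / 64 < s) (ht : 0 ≤ t)
    (h : s * s * t ≤ 25 / 64 * (s * t)) : t = 0 := by
  have hs0 : 0 < s := lt_trans (by norm_num) hs
  rcases eq_or_lt_of_le ht with h0 | h0
  · exact h0.symm
  · exfalso
    have hkey := mul_pos (mul_pos hs0 h0) (sub_pos.2 hs)
    nlinarith

private lemma aux_cancel' {s t : ℝ} (hs : 25 / 64 < s) (ht : 0 ≤ t)
    (h : s * t ≤ 25 / 64 * t) : t = 0 := by nlinarith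

private lemma dotSelf_nonneg {m : Type*} [Fintype m] (v : m → ℝ) : 0 ≤ v ⬝ᵥ v :=
  Finset.sum_nonneg fun _ _ => mul_self_nonneg _

private lemma dot_tmul {m k : Type*} [Fintype m] [Fintype k] (M : Matrix m k ℝ)
    (v : m → ℝ) (w : k → ℝ) : v ⬝ᵥ (M *ᵥ w) = (Mᵀ *ᵥ v) ⬝ᵥ w := by
  rw [Matrix.dotProduct_mulVec, Matrix.mulVec_transpose]

/-- With `Y₀ = UVᵀ + E`, `E ∈ T⊥`, `‖E‖_op ≤ 5/8`, the matrix `I − Ỹ` is PSD, its kernel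
contains the range of `[U; V]`, its rank is `2n − r`, and every nonzero eigenvalue is at
least `3/8`. -/
theorem stmt12 (n r : ℕ) (hrn : r ≤ n)
    (U V : Matrix (Fin n) (Fin r) ℝ) (hU : Uᵀ * U = 1) (hV : Vᵀ * V = 1)
    (E : Matrix (Fin n) (Fin n) ℝ) (hUE : Uᵀ * E = 0) (hEV : E * V = 0)
    (hEnorm : ‖Matrix.toEuclideanCLM (𝕜 := ℝ) E‖ ≤ 5 / 8)
    (Ytilde : Matrix (Fin n ⊕ Fin n) (Fin n ⊕ Fin n) ℝ)
    (hYtilde : Ytilde = Matrix.fromBlocks 0 (U * Vᵀ + E) (U * Vᵀ + E)ᵀ 0) :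
    (1 - Ytilde).PosSemidef ∧
    (∀ c : Fin r → ℝ,
      (1 - Ytilde).mulVec (Sum.elim (U.mulVec c) (V.mulVec c)) = 0) ∧
    (1 - Ytilde).rank = 2 * n - r ∧
    (∀ (μ : ℝ) (x : Fin n ⊕ Fin n → ℝ), x ≠ 0 →
      (1 - Ytilde).mulVec x = μ • x → μ = 0 ∨ (3 / 8 : ℝ) ≤ μ) := by
  set Y : Matrix (Fin n) (Fin n) ℝ := U * Vᵀ + E with hYdef
  -- basic transposed hypotheses
  have hEtU : Eᵀ * U = 0 := by
    calc Eᵀ * U = (Uᵀ * E)ᵀ := by rw [Matrix.transpose_mul, Matrix.transpose_transpose]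
      _ = 0 := by rw [hUE, Matrix.transpose_zero]
  have hVtEt : Vᵀ * Eᵀ = 0 := by
    calc Vᵀ * Eᵀ = (E * V)ᵀ := by rw [Matrix.transpose_mul]
      _ = 0 := by rw [hEV, Matrix.transpose_zero]
  -- norm hypothesis in dot-product form
  have hE : ∀ v : Fin n → ℝ, (E *ᵥ v) ⬝ᵥ (E *ᵥ v) ≤ (25 / 64) * (v ⬝ᵥ v) := by
    intro v
    have hnorm : ∀ w : Fin n → ℝ,
        w ⬝ᵥ w = ‖(WithLp.equiv 2 (Fin n → ℝ)).symm w‖ ^ 2 := by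
      intro w
      rw [EuclideanSpace.norm_eq, Real.sq_sqrt (by positivity)]
      simp [dotProduct, Real.norm_eq_abs, sq_abs, sq]
    have h1 : ‖(Matrix.toEuclideanCLM (𝕜 := ℝ) E) ((WithLp.equiv 2 (Fin n → ℝ)).symm v)‖
        ≤ 5 / 8 * ‖(WithLp.equiv 2 (Fin n → ℝ)).symm v‖ :=
      le_trans (ContinuousLinearMap.le_opNorm _ _)
        (mul_le_mul_of_nonneg_right hEnorm (norm_nonneg _))
    rw [WithLp.equiv_symm_apply, Matrix.toEuclideanCLM_toLp] at h1
    have h2 : ‖(WithLp.equiv 2 (Fin n → ℝ)).symm (E *ᵥ v)‖ ^ 2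
        ≤ (5 / 8 * ‖(WithLp.equiv 2 (Fin n → ℝ)).symm v‖) ^ 2 :=
      pow_le_pow_left₀ (norm_nonneg _) h1 2
    rw [hnorm (E *ᵥ v), hnorm v]
    nlinarith [h2]
  -- key matrix identities
  have hYV : Y * V = U := by
    rw [hYdef, Matrix.add_mul, Matrix.mul_assoc, hV, hEV]; simp
  have hYtU : Yᵀ * U = V := by
    rw [hYdef, Matrix.transpose_add, Matrix.transpose_mul, Matrix.transpose_transpose,
      Matrix.add_mul, Matrix.mul_assoc, hU, hEtU]; simp
  have hYYt : Y * Yᵀ = U * Uᵀ + E * Eᵀ := by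
    rw [hYdef, Matrix.transpose_add, Matrix.transpose_mul, Matrix.transpose_transpose,
      Matrix.add_mul, Matrix.mul_add, Matrix.mul_add]
    rw [show U * Vᵀ * (V * Uᵀ) = U * Uᵀ by
      rw [Matrix.mul_assoc, ← Matrix.mul_assoc Vᵀ, hV, Matrix.one_mul],
      show U * Vᵀ * Eᵀ = 0 by rw [Matrix.mul_assoc, hVtEt, Matrix.mul_zero],
      show E * (V * Uᵀ) = 0 by rw [← Matrix.mul_assoc, hEV, Matrix.zero_mul]]
    abel
  have hYtY : Yᵀ * Y = V * Vᵀ + Eᵀ * E := by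
    rw [hYdef, Matrix.transpose_add, Matrix.transpose_mul, Matrix.transpose_transpose,
      Matrix.add_mul, Matrix.mul_add, Matrix.mul_add]
    rw [show V * Uᵀ * (U * Vᵀ) = V * Vᵀ by
      rw [Matrix.mul_assoc, ← Matrix.mul_assoc Uᵀ, hU, Matrix.one_mul],
      show V * Uᵀ * E = 0 by rw [Matrix.mul_assoc, hUE, Matrix.mul_zero],
      show Eᵀ * (U * Vᵀ) = 0 by rw [← Matrix.mul_assoc, hEtU, Matrix.zero_mul]]
    abel
  -- operator norm of Y is at most 1
  have hYbound : ∀ v : Fin n → ℝ, (Y *ᵥ v) ⬝ᵥ (Y *ᵥ v) ≤ v ⬝ᵥ v := by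
    intro v
    have h1 : (Y *ᵥ v) ⬝ᵥ (Y *ᵥ v) = (Vᵀ *ᵥ v) ⬝ᵥ (Vᵀ *ᵥ v) + (E *ᵥ v) ⬝ᵥ (E *ᵥ v) := by
      calc (Y *ᵥ v) ⬝ᵥ (Y *ᵥ v) = v ⬝ᵥ ((Yᵀ * Y) *ᵥ v) := by
            rw [← Matrix.mulVec_mulVec, dot_tmul Y (Y *ᵥ v) v, dotProduct_comm]
        _ = v ⬝ᵥ ((V * Vᵀ) *ᵥ v) + v ⬝ᵥ ((Eᵀ * E) *ᵥ v) := by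
            rw [hYtY, Matrix.add_mulVec, dotProduct_add]
        _ = (Vᵀ *ᵥ v) ⬝ᵥ (Vᵀ *ᵥ v) + (E *ᵥ v) ⬝ᵥ (E *ᵥ v) := by
            rw [← Matrix.mulVec_mulVec v V Vᵀ, dot_tmul V v (Vᵀ *ᵥ v),
              ← Matrix.mulVec_mulVec v Eᵀ E, dot_tmul Eᵀ v (E *ᵥ v),
              Matrix.transpose_transpose]
    have h2 : E *ᵥ v = E *ᵥ (v - V *ᵥ (Vᵀ *ᵥ v)) := by
      rw [Matrix.mulVec_sub, Matrix.mulVec_mulVec _ E V, hEV, Matrix.zero_mulVec, sub_zero]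
    have h3 : (v - V *ᵥ (Vᵀ *ᵥ v)) ⬝ᵥ (v - V *ᵥ (Vᵀ *ᵥ v))
        = v ⬝ᵥ v - (Vᵀ *ᵥ v) ⬝ᵥ (Vᵀ *ᵥ v) := by
      have e1 : v ⬝ᵥ (V *ᵥ (Vᵀ *ᵥ v)) = (Vᵀ *ᵥ v) ⬝ᵥ (Vᵀ *ᵥ v) := by
        rw [dot_tmul]
      have e2 : (V *ᵥ (Vᵀ *ᵥ v)) ⬝ᵥ (V *ᵥ (Vᵀ *ᵥ v)) = (Vᵀ *ᵥ v) ⬝ᵥ (Vᵀ *ᵥ v) := by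
        rw [dot_tmul, Matrix.mulVec_mulVec _ Vᵀ V, hV, Matrix.one_mulVec]
      have e3 : (V *ᵥ (Vᵀ *ᵥ v)) ⬝ᵥ v = (Vᵀ *ᵥ v) ⬝ᵥ (Vᵀ *ᵥ v) := by
        rw [dotProduct_comm, e1]
      rw [dotProduct_sub, sub_dotProduct, sub_dotProduct, e1, e2, e3]
      ring
    have h4 := hE (v - V *ᵥ (Vᵀ *ᵥ v))
    rw [← h2, h3] at h4
    have h5 : 0 ≤ v ⬝ᵥ v - (Vᵀ *ᵥ v) ⬝ᵥ (Vᵀ *ᵥ v) := by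
      rw [← h3]; exact dotSelf_nonneg _
    linarith
  subst hYtilde
  -- decompose vectors
  have hdecomp : ∀ x : Fin n ⊕ Fin n → ℝ,
      x = Sum.elim (fun i => x (Sum.inl i)) (fun i => x (Sum.inr i)) := by
    intro x; funext s; cases s <;> rfl
  have hmulY : ∀ a b : Fin n → ℝ,
      (Matrix.fromBlocks 0 Y Yᵀ 0) *ᵥ (Sum.elim a b) = Sum.elim (Y *ᵥ b) (Yᵀ *ᵥ a) := by
    intro a b
    rw [Matrix.fromBlocks_mulVec]
    simp
  -- quadratic form
  have hquad : ∀ a b : Fin n → ℝ,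
      (Sum.elim a b) ⬝ᵥ ((1 - Matrix.fromBlocks 0 Y Yᵀ 0) *ᵥ (Sum.elim a b))
        = a ⬝ᵥ a + b ⬝ᵥ b - 2 * (a ⬝ᵥ (Y *ᵥ b)) := by
    intro a b
    rw [Matrix.sub_mulVec, Matrix.one_mulVec, dotProduct_sub, hmulY,
      sumElim_dotProduct_sumElim, sumElim_dotProduct_sumElim]
    have : b ⬝ᵥ (Yᵀ *ᵥ a) = a ⬝ᵥ (Y *ᵥ b) := by
      rw [dot_tmul, Matrix.transpose_transpose, dotProduct_comm]
    rw [this]; ring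
  have hpsd_quad : ∀ a b : Fin n → ℝ,
      0 ≤ a ⬝ᵥ a + b ⬝ᵥ b - 2 * (a ⬝ᵥ (Y *ᵥ b)) := by
    intro a b
    have h0 : 0 ≤ (a - Y *ᵥ b) ⬝ᵥ (a - Y *ᵥ b) := dotSelf_nonneg _
    have h1 : (a - Y *ᵥ b) ⬝ᵥ (a - Y *ᵥ b)
        = a ⬝ᵥ a - 2 * (a ⬝ᵥ (Y *ᵥ b)) + (Y *ᵥ b) ⬝ᵥ (Y *ᵥ b) := by
      rw [dotProduct_sub, sub_dotProduct, sub_dotProduct,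
        dotProduct_comm (Y *ᵥ b) a]
      ring
    have h2 := hYbound b
    rw [h1] at h0
    linarith
  -- PSD
  have hPSD : (1 - Matrix.fromBlocks 0 Y Yᵀ 0).PosSemidef := by
    rw [Matrix.posSemidef_iff_dotProduct_mulVec]
    constructor
    · have hblock : (Matrix.fromBlocks 0 Y Yᵀ 0).IsHermitian := by
        show _ᴴ = _
        rw [Matrix.conjTranspose_eq_transpose_of_trivial, Matrix.fromBlocks_transpose,
          Matrix.transpose_transpose, Matrix.transpose_zero]
      exact Matrix.isHermitian_one.sub hblock
    · intro x
      have hx := hdecomp x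
      have hq := hpsd_quad (fun i => x (Sum.inl i)) (fun i => x (Sum.inr i))
      rw [← hquad] at hq
      rw [show (star x : Fin n ⊕ Fin n → ℝ) = x from funext fun _ => rfl]
      rw [hx] at hq ⊢
      exact hq
  -- kernel membership
  have hker : ∀ c : Fin r → ℝ,
      (1 - Matrix.fromBlocks 0 Y Yᵀ 0) *ᵥ (Sum.elim (U *ᵥ c) (V *ᵥ c)) = 0 := by
    intro c
    rw [Matrix.sub_mulVec, Matrix.one_mulVec, hmulY]
    rw [Matrix.mulVec_mulVec _ Y V, Matrix.mulVec_mulVec _ Yᵀ U, hYV, hYtU]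
    simp
  refine ⟨hPSD, hker, ?_, ?_⟩
  · -- rank
    set L : (Fin r → ℝ) →ₗ[ℝ] (Fin n ⊕ Fin n → ℝ) :=
      { toFun := fun c => Sum.elim (U *ᵥ c) (V *ᵥ c)
        map_add' := by
          intro c d; funext s; cases s <;> simp [Matrix.mulVec_add]
        map_smul' := by
          intro t c; funext s; cases s <;> simp [Matrix.mulVec_smul] } with hLdef
    have hLinj : Function.Injective L := by
      rw [← LinearMap.ker_eq_bot]
      apply LinearMap.ker_eq_bot'.2
      intro c hc
      have h1 : U *ᵥ c = 0 := by
        have h := congr_fun hc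
        funext i; exact h (Sum.inl i)
      have h2 : (Uᵀ * U) *ᵥ c = 0 := by
        rw [← Matrix.mulVec_mulVec, h1, Matrix.mulVec_zero]
      rwa [hU, Matrix.one_mulVec] at h2
    have hkereq : LinearMap.ker (1 - Matrix.fromBlocks 0 Y Yᵀ 0).mulVecLin
        = LinearMap.range L := by
      ext x
      rw [LinearMap.mem_ker, LinearMap.mem_range, Matrix.mulVecLin_apply]
      constructor
      · intro hx0
        set a : Fin n → ℝ := fun i => x (Sum.inl i) with ha
        set b : Fin n → ℝ := fun i => x (Sum.inr i) with hb
        have hx := hdecomp x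
        rw [hx, Matrix.sub_mulVec, Matrix.one_mulVec, hmulY, sub_eq_zero] at hx0
        have hYb : Y *ᵥ b = a := by
          have h := congr_fun hx0; funext i; exact (h (Sum.inl i)).symm
        have hYta : Yᵀ *ᵥ a = b := by
          have h := congr_fun hx0; funext i; exact (h (Sum.inr i)).symm
        have hYYa : U *ᵥ (Uᵀ *ᵥ a) + E *ᵥ (Eᵀ *ᵥ a) = a := by
          have h : Y *ᵥ (Yᵀ *ᵥ a) = a := by rw [hYta, hYb]
          rw [Matrix.mulVec_mulVec, hYYt, Matrix.add_mulVec, ← Matrix.mulVec_mulVec,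
            ← Matrix.mulVec_mulVec] at h
          exact h
        set w : Fin n → ℝ := Eᵀ *ᵥ a with hw
        set z : Fin n → ℝ := a - U *ᵥ (Uᵀ *ᵥ a) with hz
        have hzEw : z = E *ᵥ w := by
          rw [hz]; exact sub_eq_of_eq_add' hYYa.symm
        have hEtz : Eᵀ *ᵥ z = w := by
          rw [hz, Matrix.mulVec_sub, Matrix.mulVec_mulVec _ Eᵀ U, hEtU,
            Matrix.zero_mulVec, sub_zero, hw]
        have hzz : z ⬝ᵥ z = w ⬝ᵥ w := by
          calc z ⬝ᵥ z = z ⬝ᵥ (E *ᵥ w) := by rw [← hzEw]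
            _ = (Eᵀ *ᵥ z) ⬝ᵥ w := dot_tmul E z w
            _ = w ⬝ᵥ w := by rw [hEtz]
        have hzb := hE w
        rw [← hzEw, hzz] at hzb
        have hwzero : w = 0 := by
          rw [← dotProduct_self_eq_zero]
          have := dotSelf_nonneg w
          linarith
        have hzzero : z = 0 := by rw [hzEw, hwzero, Matrix.mulVec_zero]
        have haU : a = U *ᵥ (Uᵀ *ᵥ a) := by
          have h := hzzero; rw [hz, sub_eq_zero] at h; exact h
        refine ⟨Uᵀ *ᵥ a, ?_⟩
        have hbV : b = V *ᵥ (Uᵀ *ᵥ a) := by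
          conv_lhs => rw [← hYta, haU]
          rw [Matrix.mulVec_mulVec _ Yᵀ U, hYtU]
        rw [hx]
        show Sum.elim (U *ᵥ (Uᵀ *ᵥ a)) (V *ᵥ (Uᵀ *ᵥ a)) = Sum.elim a b
        rw [← haU, ← hbV]
      · rintro ⟨c, rfl⟩
        exact hker c
    have hrange : Module.finrank ℝ (LinearMap.range L) = r := by
      rw [LinearMap.finrank_range_of_inj hLinj]
      simp [Module.finrank_pi]
    have hrnull := LinearMap.finrank_range_add_finrank_ker
      (1 - Matrix.fromBlocks 0 Y Yᵀ 0).mulVecLin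
    rw [hkereq, hrange] at hrnull
    have hdim : Module.finrank ℝ (Fin n ⊕ Fin n → ℝ) = 2 * n := by
      rw [Module.finrank_pi]
      simp [Fintype.card_sum]
      ring
    rw [hdim] at hrnull
    show Module.finrank ℝ (LinearMap.range (1 - Matrix.fromBlocks 0 Y Yᵀ 0).mulVecLin)
      = 2 * n - r
    omega
  · -- eigenvalue bound
    intro μ x hx0 hxeig
    rcases le_or_gt (3 / 8 : ℝ) μ with h38 | h38
    · exact Or.inr h38
    left
    by_contra hμ0
    have hxx : 0 < x ⬝ᵥ x := by
      rcases lt_or_eq_of_le (dotSelf_nonneg x) with h | h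
      · exact h
      · exact absurd (dotProduct_self_eq_zero.1 h.symm) hx0
    have hμpos : 0 < μ := by
      have hp := hPSD.dotProduct_mulVec_nonneg x
      rw [show (star x : Fin n ⊕ Fin n → ℝ) = x from funext fun _ => rfl, hxeig,
        dotProduct_smul] at hp
      have hge : 0 ≤ μ := nonneg_of_mul_nonneg_right (by simpa [mul_comm] using hp) hxx
      exact lt_of_le_of_ne hge (Ne.symm hμ0)
    set lam : ℝ := 1 - μ with hlam
    have hlam1 : 5 / 8 < lam := by rw [hlam]; linarith
    have hlam2 : lam < 1 := by rw [hlam]; linarith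
    have hlamsq : 25 / 64 < lam ^ 2 := (aux_sq hμpos h38).1
    have hlamsq1 : lam ^ 2 < 1 := (aux_sq hμpos h38).2
    set a : Fin n → ℝ := fun i => x (Sum.inl i) with ha
    set b : Fin n → ℝ := fun i => x (Sum.inr i) with hb
    have hx := hdecomp x
    have hYeq : (Matrix.fromBlocks 0 Y Yᵀ 0) *ᵥ x = lam • x := by
      have h : x - (Matrix.fromBlocks 0 Y Yᵀ 0) *ᵥ x = μ • x := by
        rw [← hxeig, Matrix.sub_mulVec, Matrix.one_mulVec]
      have h2 : (Matrix.fromBlocks 0 Y Yᵀ 0) *ᵥ x = x - μ • x := by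
        rw [← h]; abel
      rw [h2, hlam, sub_smul, one_smul]
    rw [hx, hmulY] at hYeq
    have hYb : Y *ᵥ b = lam • a := by
      have h := congr_fun hYeq; funext i
      have h' := h (Sum.inl i); simpa using h'
    have hYta : Yᵀ *ᵥ a = lam • b := by
      have h := congr_fun hYeq; funext i
      have h' := h (Sum.inr i); simpa using h'
    -- a side
    have hYYa : U *ᵥ (Uᵀ *ᵥ a) + E *ᵥ (Eᵀ *ᵥ a) = (lam ^ 2) • a := by
      have h : Y *ᵥ (Yᵀ *ᵥ a) = (lam ^ 2) • a := by
        rw [hYta, Matrix.mulVec_smul, hYb, smul_smul, sq]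
      rw [Matrix.mulVec_mulVec, hYYt, Matrix.add_mulVec, ← Matrix.mulVec_mulVec,
        ← Matrix.mulVec_mulVec] at h
      exact h
    have hUta : Uᵀ *ᵥ a = 0 := by
      have h1 : Uᵀ *ᵥ (U *ᵥ (Uᵀ *ᵥ a) + E *ᵥ (Eᵀ *ᵥ a)) = Uᵀ *ᵥ ((lam ^ 2) • a) := by
        rw [hYYa]
      rw [Matrix.mulVec_add, Matrix.mulVec_mulVec _ Uᵀ U, Matrix.mulVec_mulVec _ Uᵀ E,
        hU, hUE, Matrix.one_mulVec, Matrix.zero_mulVec, add_zero,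
        Matrix.mulVec_smul] at h1
      have h2 : (1 - lam ^ 2) • (Uᵀ *ᵥ a) = 0 := by
        rw [sub_smul, one_smul, sub_eq_zero]; exact h1
      have h3 : (1 - lam ^ 2 : ℝ) ≠ 0 := ne_of_gt (by linarith)
      exact (smul_eq_zero.1 h2).resolve_left h3
    have hEEa : E *ᵥ (Eᵀ *ᵥ a) = (lam ^ 2) • a := by
      rw [← hYYa, hUta, Matrix.mulVec_zero, zero_add]
    have hazero : a = 0 := by
      set w : Fin n → ℝ := Eᵀ *ᵥ a with hw
      have hww : w ⬝ᵥ w = lam ^ 2 * (a ⬝ᵥ a) := by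
        calc w ⬝ᵥ w = (Eᵀ *ᵥ a) ⬝ᵥ w := by rw [hw]
          _ = a ⬝ᵥ (E *ᵥ w) := (dot_tmul E a w).symm
          _ = a ⬝ᵥ ((lam ^ 2) • a) := by rw [hEEa]
          _ = lam ^ 2 * (a ⬝ᵥ a) := by
              rw [dotProduct_smul, smul_eq_mul]
      have hEww : (E *ᵥ w) ⬝ᵥ (E *ᵥ w) = lam ^ 2 * lam ^ 2 * (a ⬝ᵥ a) := by
        rw [hEEa, smul_dotProduct, dotProduct_smul, smul_eq_mul,
          smul_eq_mul]
        ring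
      have hEwb := hE w
      rw [hEww, hww] at hEwb
      have haa : a ⬝ᵥ a = 0 := aux_cancel hlamsq (dotSelf_nonneg a) hEwb
      exact dotProduct_self_eq_zero.1 haa
    -- b side
    have hYtYb : V *ᵥ (Vᵀ *ᵥ b) + Eᵀ *ᵥ (E *ᵥ b) = (lam ^ 2) • b := by
      have h : Yᵀ *ᵥ (Y *ᵥ b) = (lam ^ 2) • b := by
        rw [hYb, Matrix.mulVec_smul, hYta, smul_smul, sq]
      rw [Matrix.mulVec_mulVec, hYtY, Matrix.add_mulVec, ← Matrix.mulVec_mulVec,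
        ← Matrix.mulVec_mulVec] at h
      exact h
    have hVtb : Vᵀ *ᵥ b = 0 := by
      have h1 : Vᵀ *ᵥ (V *ᵥ (Vᵀ *ᵥ b) + Eᵀ *ᵥ (E *ᵥ b)) = Vᵀ *ᵥ ((lam ^ 2) • b) := by
        rw [hYtYb]
      rw [Matrix.mulVec_add, Matrix.mulVec_mulVec _ Vᵀ V, Matrix.mulVec_mulVec _ Vᵀ Eᵀ,
        hV, hVtEt, Matrix.one_mulVec, Matrix.zero_mulVec, add_zero,
        Matrix.mulVec_smul] at h1
      have h2 : (1 - lam ^ 2) • (Vᵀ *ᵥ b) = 0 := by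
        rw [sub_smul, one_smul, sub_eq_zero]; exact h1
      have h3 : (1 - lam ^ 2 : ℝ) ≠ 0 := ne_of_gt (by linarith)
      exact (smul_eq_zero.1 h2).resolve_left h3
    have hEEb : Eᵀ *ᵥ (E *ᵥ b) = (lam ^ 2) • b := by
      rw [← hYtYb, hVtb, Matrix.mulVec_zero, zero_add]
    have hbzero : b = 0 := by
      have hww : (E *ᵥ b) ⬝ᵥ (E *ᵥ b) = lam ^ 2 * (b ⬝ᵥ b) := by
        calc (E *ᵥ b) ⬝ᵥ (E *ᵥ b) = (Eᵀ *ᵥ (E *ᵥ b)) ⬝ᵥ b := (dot_tmul E (E *ᵥ b) b)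
          _ = ((lam ^ 2) • b) ⬝ᵥ b := by rw [hEEb]
          _ = lam ^ 2 * (b ⬝ᵥ b) := by rw [smul_dotProduct, smul_eq_mul]
      have hEwb := hE b
      rw [hww] at hEwb
      have hbb : b ⬝ᵥ b = 0 := aux_cancel' hlamsq (dotSelf_nonneg b) hEwb
      exact dotProduct_self_eq_zero.1 hbb
    apply hx0
    funext s
    cases s with
    | inl i => exact congr_fun hazero i
    | inr i => exact congr_fun hbzero i
end
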